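/- For all odd integers t ≥ 1 and all integers n ≥ 0, the number of t-colored overpartitions of n satisfies: p̄_{-t}(n) ≡ 1 (mod 4) if n = 0; p̄_{-t}(n) ≡ 2 (mod 4) if n is a positive perfect square; and p̄_{-t}(n) ≡ 0 (mod 4) otherwise. -/

import Mathlib

open scoped Classical

/-- The infinite product `∏_{k ≥ 0} f k` of formal power series, in the situation where,
for each fixed power of `q`, only finitely many factors contribute: the coefficient of
`q^n` is read off from the product of the factors `f 0, …, f n` (all later factors are
assumed to be `1 + O(q^{n+1})`). -/
noncomputable def seriesProd (f : ℕ → PowerSeries ℤ) : PowerSeries ℤ :=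
  PowerSeries.mk fun n => PowerSeries.coeff n (∏ k ∈ Finset.range (n + 1), f k)

/-- The generating function `∏_{k ≥ 1} (1 - q^{2k})^t / (1 - q^k)^{2t}`
for `t`-colored overpartitions. -/
noncomputable def overGF (t : ℕ) : PowerSeries ℤ :=
  seriesProd fun k =>
    (1 - (PowerSeries.X : PowerSeries ℤ) ^ (2 * (k + 1))) ^ t *
      (PowerSeries.invOfUnit (1 - (PowerSeries.X : PowerSeries ℤ) ^ (k + 1)) 1) ^ (2 * t)

/-- `p̄_{-t}(n)`, the number of `t`-colored overpartitions of `n`: the coefficient of `q^n`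
in `∏_{k ≥ 1} (1 - q^{2k})^t / (1 - q^k)^{2t}`. -/
noncomputable def pbar (t n : ℕ) : ℤ :=
  PowerSeries.coeff n (overGF t)

/-- Ramanujan's theta function `φ(q^m) = 1 + 2 ∑_{k ≥ 1} q^{m k²}`. -/
noncomputable def phi (m : ℕ) : PowerSeries ℤ :=
  PowerSeries.mk fun n =>
    if n = 0 then 1 else if ∃ k : ℕ, 0 < k ∧ n = m * k ^ 2 then 2 else 0

/-- `φ(-q) = 1 + 2 ∑_{k ≥ 1} (-1)^{k²} q^{k²}` (note `(-1)^{k²} = (-1)^n` at `n = k²`). -/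
noncomputable def phiNeg : PowerSeries ℤ :=
  PowerSeries.mk fun n =>
    if n = 0 then 1 else if ∃ k : ℕ, 0 < k ∧ n = k ^ 2 then 2 * (-1) ^ n else 0

/-- Ramanujan's theta function `ψ(q^m) = ∑_{k ≥ 0} q^{m·k(k+1)/2}`. -/
noncomputable def psi (m : ℕ) : PowerSeries ℤ :=
  PowerSeries.mk fun n => if ∃ k : ℕ, 2 * n = m * (k * (k + 1)) then 1 else 0

/-- `f_r = ∏_{j ≥ 1} (1 - q^{r j})`. -/
noncomputable def fr (r : ℕ) : PowerSeries ℤ :=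
  seriesProd fun j => 1 - (PowerSeries.X : PowerSeries ℤ) ^ (r * (j + 1))


lemma odd_card_divisors {n : ℕ} (hn : n ≠ 0) :
    Odd n.divisors.card ↔ ∃ k : ℕ, n = k ^ 2 := by
  constructor
  · intro hodd
    by_contra hsq
    have h0 : ∑ _d ∈ n.divisors, (1 : ZMod 2) = 0 := by
      apply Finset.sum_involution (fun d _ => n / d)
      · intro a _; decide
      · intro d hd _
        intro heq
        rw [Nat.mem_divisors] at hd
        exact hsq ⟨d, by rw [sq]; exact Nat.eq_mul_of_div_eq_right hd.1 heq⟩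
      · intro d hd
        rw [Nat.mem_divisors] at hd ⊢
        exact ⟨Nat.div_dvd_of_dvd hd.1, hn⟩
      · intro d hd
        rw [Nat.mem_divisors] at hd
        exact Nat.div_div_self hd.1 hn
    simp only [Finset.sum_const, nsmul_eq_mul, mul_one] at h0
    rw [ZMod.natCast_eq_zero_iff] at h0
    exact (Nat.not_even_iff_odd.mpr hodd) (even_iff_two_dvd.mpr h0)
  · rintro ⟨k, rfl⟩
    have hk : k ≠ 0 := by rintro rfl; simp at hn
    have hkmem : k ∈ (k ^ 2).divisors := by
      rw [Nat.mem_divisors]; exact ⟨⟨k, sq k⟩, hn⟩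
    have hgne : ∀ d, d ∈ (k ^ 2).divisors.erase k → k ^ 2 / d ≠ d := by
      intro d hd heq
      have hd' := Finset.mem_of_mem_erase hd
      rw [Nat.mem_divisors] at hd'
      have h2 : k ^ 2 = d ^ 2 := by
        rw [sq d]; exact Nat.eq_mul_of_div_eq_right hd'.1 heq
      exact Finset.ne_of_mem_erase hd
        (Nat.pow_left_injective (by norm_num) h2.symm)
    have hgmem : ∀ d, d ∈ (k ^ 2).divisors.erase k →
        k ^ 2 / d ∈ (k ^ 2).divisors.erase k := by
      intro d hd
      have hdne := Finset.ne_of_mem_erase hd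
      have hd' := Finset.mem_of_mem_erase hd
      rw [Nat.mem_divisors] at hd'
      refine Finset.mem_erase.mpr ⟨?_, ?_⟩
      · intro heq
        apply hdne
        have h3 : k ^ 2 / (k ^ 2 / d) = d := Nat.div_div_self hd'.1 hn
        rw [heq] at h3
        rw [← h3, sq, Nat.mul_div_cancel_left _ (Nat.pos_of_ne_zero hk)]
      · rw [Nat.mem_divisors]
        exact ⟨Nat.div_dvd_of_dvd hd'.1, hn⟩
    have hginv : ∀ d, d ∈ (k ^ 2).divisors.erase k →
        k ^ 2 / (k ^ 2 / d) = d := by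
      intro d hd
      have hd' := Finset.mem_of_mem_erase hd
      rw [Nat.mem_divisors] at hd'
      exact Nat.div_div_self hd'.1 hn
    have h0 : ∑ _d ∈ (k ^ 2).divisors.erase k, (1 : ZMod 2) = 0 :=
      Finset.sum_involution (fun d _ => k ^ 2 / d)
        (fun a _ => by decide)
        (fun d hd _ => hgne d hd)
        (fun d hd => hgmem d hd)
        (fun d hd => hginv d hd)
    simp only [Finset.sum_const, nsmul_eq_mul, mul_one] at h0
    rw [ZMod.natCast_eq_zero_iff] at h0
    have hce : ((k ^ 2).divisors.erase k).card = (k ^ 2).divisors.card - 1 :=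
      Finset.card_erase_of_mem hkmem
    have hpos : 0 < (k ^ 2).divisors.card := Finset.card_pos.mpr ⟨k, hkmem⟩
    obtain ⟨s, hs⟩ := h0
    exact ⟨s, by omega⟩

open PowerSeries

/-- `∑_{j} X^{m j}` as a power series over ℤ. -/
noncomputable def geomS (m : ℕ) : PowerSeries ℤ :=
  PowerSeries.mk fun n => if m ∣ n then 1 else 0

lemma one_sub_X_pow_mul_geomS (m : ℕ) (hm : m ≠ 0) :
    (1 - (X : PowerSeries ℤ) ^ m) * geomS m = 1 := by
  ext n
  rw [sub_mul, one_mul, map_sub, mul_comm, PowerSeries.coeff_mul_X_pow']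
  simp only [geomS, coeff_mk, coeff_one]
  rcases Nat.eq_zero_or_pos n with rfl | hn
  · have : ¬ m ≤ 0 := by omega
    simp [this]
  · have hn0 : n ≠ 0 := by omega
    simp only [hn0, if_false]
    by_cases hle : m ≤ n
    · have hiff : m ∣ n - m ↔ m ∣ n := by
        constructor
        · intro h
          have h2 := Nat.dvd_add h (dvd_refl m)
          rwa [Nat.sub_add_cancel hle] at h2
        · intro h; exact Nat.dvd_sub h dvd_rfl
      simp [hle, hiff]
    · have hnd : ¬ m ∣ n := fun h => hn0 (Nat.eq_zero_of_dvd_of_lt h (by omega))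
      simp [hle, hnd]

lemma invOfUnit_eq_geomS (m : ℕ) (hm : m ≠ 0) :
    PowerSeries.invOfUnit (1 - (X : PowerSeries ℤ) ^ m) 1 = geomS m := by
  have hc : PowerSeries.constantCoeff (1 - (X : PowerSeries ℤ) ^ m) = ((1 : ℤˣ) : ℤ) := by
    simp [Nat.pos_of_ne_zero hm, hm]
  have h1 := PowerSeries.mul_invOfUnit (1 - (X : PowerSeries ℤ) ^ m) 1 hc
  have h2 := one_sub_X_pow_mul_geomS m hm
  calc PowerSeries.invOfUnit (1 - (X : PowerSeries ℤ) ^ m) 1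
      = (geomS m * (1 - (X : PowerSeries ℤ) ^ m)) *
          PowerSeries.invOfUnit (1 - (X : PowerSeries ℤ) ^ m) 1 := by
        rw [mul_comm (geomS m), h2, one_mul]
    _ = geomS m * ((1 - (X : PowerSeries ℤ) ^ m) *
          PowerSeries.invOfUnit (1 - (X : PowerSeries ℤ) ^ m) 1) := by ring
    _ = geomS m := by rw [h1, mul_one]

lemma geomS_eq (m : ℕ) (hm : m ≠ 0) :
    geomS m = 1 + X ^ m * geomS m := by
  have h := one_sub_X_pow_mul_geomS m hm
  rw [sub_mul, one_mul] at h
  linear_combination h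

/-- The key factor identity over `ℤ`. -/
lemma factor_eq (m t : ℕ) (hm : m ≠ 0) :
    (1 - (X : PowerSeries ℤ) ^ (2 * m)) ^ t * (geomS m) ^ (2 * t) =
      (1 + 2 * (X ^ m * geomS m)) ^ t := by
  rw [show geomS m ^ (2 * t) = (geomS m ^ 2) ^ t from pow_mul _ 2 t, ← mul_pow]
  congr 1
  have h := one_sub_X_pow_mul_geomS m hm
  have hG := geomS_eq m hm
  calc (1 - (X : PowerSeries ℤ) ^ (2 * m)) * geomS m ^ 2
      = ((1 - X ^ m) * geomS m) * ((1 + X ^ m) * geomS m) := by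
        rw [show (X : PowerSeries ℤ) ^ (2 * m) = (X ^ m) ^ 2 by rw [← pow_mul, mul_comm]]
        ring
    _ = (1 + X ^ m) * geomS m := by rw [h, one_mul]
    _ = 1 + 2 * (X ^ m * geomS m) := by linear_combination h

lemma two_mul_two_zero : (2 : PowerSeries (ZMod 4)) * 2 = 0 := by
  have : ((2 : ZMod 4) * 2) = 0 := by decide
  have h2 : (2 : PowerSeries (ZMod 4)) = PowerSeries.C 2 := by
    simp [map_ofNat]
  rw [h2, ← map_mul, this, map_zero]

lemma pow_odd_eq (G : PowerSeries (ZMod 4)) {t : ℕ} (ht : Odd t) :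
    (1 + 2 * G) ^ t = 1 + 2 * G := by
  have h4 := two_mul_two_zero
  have hsq : (1 + 2 * G) ^ 2 = 1 := by
    linear_combination (G + G ^ 2) * h4
  obtain ⟨s, rfl⟩ := ht
  rw [pow_add, pow_mul, hsq, one_pow, one_mul, pow_one]

lemma prod_one_add_two (s : Finset ℕ) (g : ℕ → PowerSeries (ZMod 4)) :
    ∏ k ∈ s, (1 + 2 * g k) = 1 + 2 * ∑ k ∈ s, g k := by
  classical
  induction s using Finset.induction_on with
  | empty => simp
  | insert a s' h ih =>
    rw [Finset.prod_insert h, ih, Finset.sum_insert h]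
    linear_combination (g a * ∑ k ∈ s', g k) * two_mul_two_zero

lemma coeff_X_pow_mul_geomS (m n : ℕ) :
    PowerSeries.coeff n ((X : PowerSeries ℤ) ^ m * geomS m) =
      if m ∣ n ∧ m ≤ n then 1 else 0 := by
  rw [mul_comm, PowerSeries.coeff_mul_X_pow']
  simp only [geomS, coeff_mk]
  by_cases hle : m ≤ n
  · have hiff : m ∣ n - m ↔ m ∣ n := by
      constructor
      · intro h
        have h2 := Nat.dvd_add h (dvd_refl m)
        rwa [Nat.sub_add_cancel hle] at h2
      · intro h; exact Nat.dvd_sub h dvd_rfl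
    simp [hle, hiff, and_comm]
  · simp [hle]

open PowerSeries in
lemma pbar_cast (t n : ℕ) (ht : Odd t) :
    ((pbar t n : ℤ) : ZMod 4) =
      if n = 0 then 1 else 2 * (n.divisors.card : ZMod 4) := by
  have hstep1 : pbar t n = PowerSeries.coeff n
      (∏ k ∈ Finset.range (n + 1),
        (1 + 2 * ((X : PowerSeries ℤ) ^ (k + 1) * geomS (k + 1))) ^ t) := by
    unfold pbar overGF seriesProd
    rw [coeff_mk]
    congr 1
    refine Finset.prod_congr rfl (fun k _ => ?_)
    dsimp only
    rw [invOfUnit_eq_geomS (k + 1) (Nat.succ_ne_zero k),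
      factor_eq (k + 1) t (Nat.succ_ne_zero k)]
  rw [hstep1]
  change (Int.castRingHom (ZMod 4)) _ = _
  rw [← PowerSeries.coeff_map (Int.castRingHom (ZMod 4)), map_prod]
  have hmap : ∀ k ∈ Finset.range (n + 1),
      PowerSeries.map (Int.castRingHom (ZMod 4))
          ((1 + 2 * ((X : PowerSeries ℤ) ^ (k + 1) * geomS (k + 1))) ^ t)
        = (1 + 2 * PowerSeries.map (Int.castRingHom (ZMod 4))
            ((X : PowerSeries ℤ) ^ (k + 1) * geomS (k + 1))) ^ t := by
    intro k _
    rw [map_pow, map_add, map_one, map_mul, map_ofNat]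
  rw [Finset.prod_congr rfl hmap,
    Finset.prod_congr rfl (fun k _ => pow_odd_eq _ ht),
    prod_one_add_two, map_add, PowerSeries.coeff_one,
    show (2 : PowerSeries (ZMod 4)) = PowerSeries.C 2 by simp [map_ofNat],
    PowerSeries.coeff_C_mul, map_sum]
  have hcoeff : ∀ k, (PowerSeries.coeff n)
      (PowerSeries.map (Int.castRingHom (ZMod 4))
        ((X : PowerSeries ℤ) ^ (k + 1) * geomS (k + 1)))
      = if (k + 1) ∣ n ∧ k + 1 ≤ n then 1 else 0 := by
    intro k
    rw [PowerSeries.coeff_map, coeff_X_pow_mul_geomS]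
    split <;> simp
  rw [Finset.sum_congr rfl (fun k _ => hcoeff k)]
  by_cases hn : n = 0
  · subst hn
    have : ∀ k ∈ Finset.range 1, (if (k + 1) ∣ 0 ∧ k + 1 ≤ 0 then (1 : ZMod 4) else 0) = 0 := by
      intro k _; simp
    rw [Finset.sum_congr rfl this]
    simp
  · simp only [hn, if_false, if_neg hn]
    have hb : (∑ k ∈ Finset.range (n + 1),
        (if (k + 1) ∣ n ∧ k + 1 ≤ n then (1 : ZMod 4) else 0))
        = ((Finset.range (n + 1)).filter (fun k => (k + 1) ∣ n ∧ k + 1 ≤ n)).card := by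
      rw [Finset.sum_boole]
    have hcard : ((Finset.range (n + 1)).filter (fun k => (k + 1) ∣ n ∧ k + 1 ≤ n)).card
        = n.divisors.card := by
      refine Finset.card_bij (fun k _ => k + 1) ?_ ?_ ?_
      · intro k hk
        rw [Finset.mem_filter] at hk
        rw [Nat.mem_divisors]
        exact ⟨hk.2.1, hn⟩
      · intro a _ b _ h
        omega
      · intro d hd
        rw [Nat.mem_divisors] at hd
        have hd1 : 1 ≤ d := Nat.pos_of_dvd_of_pos hd.1 (Nat.pos_of_ne_zero hn)
        have hdn : d ≤ n := Nat.le_of_dvd (Nat.pos_of_ne_zero hn) hd.1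
        refine ⟨d - 1, ?_, ?_⟩
        · rw [Finset.mem_filter, Finset.mem_range]
          have he : d - 1 + 1 = d := by omega
          rw [he]
          exact ⟨by omega, hd.1, hdn⟩
        · omega
    rw [hb, hcard]
    simp

/-- For all odd `t ≥ 1`: `p̄_{-t}(0) ≡ 1 (mod 4)`; `p̄_{-t}(n) ≡ 2 (mod 4)` if `n` is a
positive perfect square; and `p̄_{-t}(n) ≡ 0 (mod 4)` otherwise. -/
theorem pbar_mod_four (t : ℕ) (ht1 : 1 ≤ t) (ht : Odd t) (n : ℕ) :
    (n = 0 → pbar t n ≡ 1 [ZMOD 4]) ∧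
    ((0 < n ∧ ∃ k : ℕ, n = k ^ 2) → pbar t n ≡ 2 [ZMOD 4]) ∧
    ((n ≠ 0 ∧ ¬ ∃ k : ℕ, n = k ^ 2) → pbar t n ≡ 0 [ZMOD 4]) := by
  have key := pbar_cast t n ht
  have h4 : (4 : ZMod 4) = 0 := by decide
  refine ⟨?_, ?_, ?_⟩
  · rintro rfl
    rw [if_pos rfl] at key
    have : ((pbar t 0 : ℤ) : ZMod 4) = ((1 : ℤ) : ZMod 4) := by push_cast; rw [key]
    have h2 := (ZMod.intCast_eq_intCast_iff (pbar t 0) 1 4).mp this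
    exact_mod_cast h2
  · rintro ⟨hn, hsq⟩
    have hn0 : n ≠ 0 := by omega
    obtain ⟨s, hs⟩ := (odd_card_divisors hn0).mpr hsq
    have hc : ((pbar t n : ℤ) : ZMod 4) = ((2 : ℤ) : ZMod 4) := by
      push_cast
      rw [key, if_neg hn0, hs]
      push_cast
      linear_combination (s : ZMod 4) * h4
    have h2 := (ZMod.intCast_eq_intCast_iff (pbar t n) 2 4).mp hc
    exact_mod_cast h2
  · rintro ⟨hn0, hsq⟩
    have heven : ¬ Odd n.divisors.card := fun h => hsq ((odd_card_divisors hn0).mp h)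
    obtain ⟨s, hs⟩ := Nat.not_odd_iff_even.mp heven
    have hc : ((pbar t n : ℤ) : ZMod 4) = ((0 : ℤ) : ZMod 4) := by
      push_cast
      rw [key, if_neg hn0, hs]
      push_cast
      linear_combination (s : ZMod 4) * h4
    have h2 := (ZMod.intCast_eq_intCast_iff (pbar t n) 0 4).mp hc
    exact_mod_cast h2
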